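/- Let (τ_k)_{k≥1} be independent nonnegative random variables with finite variances, and set T_n := ∑_{k≥n} τ_k, assumed a.s. finite with m_n := E[T_n] > 0. If ∑_{n≥1} Var(T_n)/m_n² < ∞, then T_n/m_n → 1 almost surely as n → ∞. -/

import Mathlib

open MeasureTheory Set Filter ProbabilityTheory

theorem stmt11 {Ω : Type*} [MeasureSpace Ω] [IsProbabilityMeasure (volume : Measure Ω)]
    (τ : ℕ → Ω → ℝ) (T : ℕ → Ω → ℝ) (m : ℕ → ℝ)
    (hmeas : ∀ k, Measurable (τ k))
    (hindep : iIndepFun τ volume)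
    (hnonneg : ∀ k ω, 0 ≤ τ k ω)
    (hL2 : ∀ k, MemLp (τ k) 2 volume)
    (hT : ∀ n, ∀ᵐ ω, HasSum (fun k => τ (n + k) ω) (T n ω))
    (hTL2 : ∀ n, MemLp (T n) 2 volume)
    (hmdef : ∀ n, m n = ∫ ω, T n ω)
    (hmpos : ∀ n, 0 < m n)
    (hvar : Summable (fun n => variance (T n) volume / (m n) ^ 2)) :
    ∀ᵐ ω, Tendsto (fun n => T n ω / m n) atTop (nhds 1) := by
  have hm : ∀ n, (volume : Measure Ω)[T n] = m n := fun n => (hmdef n).symm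
  have key : ∀ k : ℕ, ∀ᵐ ω, ∀ᶠ n in atTop, |T n ω / m n - 1| < 1 / (k + 1) := by
    intro k
    set ε : ℝ := 1 / (k + 1) with hε
    have hεpos : 0 < ε := by positivity
    set s : ℕ → Set Ω := fun n => {ω | ε * m n ≤ |T n ω - m n|} with hs
    have hcheb : ∀ n, volume (s n)
        ≤ ENNReal.ofReal (variance (T n) volume / (ε * m n) ^ 2) := by
      intro n
      have := meas_ge_le_variance_div_sq (hTL2 n) (mul_pos hεpos (hmpos n))
      simpa [hs, hm n] using this
    have hsum2 : Summable (fun n => variance (T n) volume / (ε * m n) ^ 2) := by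
      have heq : (fun n => variance (T n) volume / (ε * m n) ^ 2)
          = fun n => (1 / ε ^ 2) * (variance (T n) volume / (m n) ^ 2) := by
        funext n
        have h1 : m n ≠ 0 := (hmpos n).ne'
        ring
      rw [heq]
      exact hvar.mul_left _
    have hsum : (∑' n, volume (s n)) ≠ ⊤ := by
      refine ne_top_of_le_ne_top ?_ (ENNReal.tsum_le_tsum hcheb)
      rw [← ENNReal.ofReal_tsum_of_nonneg
        (fun n => div_nonneg (variance_nonneg _ _) (by positivity)) hsum2]
      exact ENNReal.ofReal_ne_top
    filter_upwards [ae_eventually_notMem hsum] with ω hω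
    filter_upwards [hω] with n hn
    have hlt : |T n ω - m n| < ε * m n := lt_of_not_ge hn
    have hmn : (0:ℝ) < m n := hmpos n
    have heq : |T n ω / m n - 1| = |T n ω - m n| / m n := by
      rw [show T n ω / m n - 1 = (T n ω - m n) / m n by field_simp,
        abs_div, abs_of_pos hmn]
    rw [heq]
    rw [div_lt_iff₀ hmn]
    linarith [hlt]
  have hall : ∀ᵐ ω, ∀ k : ℕ, ∀ᶠ n in atTop, |T n ω / m n - 1| < 1 / (k + 1) :=
    ae_all_iff.mpr key
  filter_upwards [hall] with ω hω
  rw [Metric.tendsto_atTop]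
  intro δ hδ
  obtain ⟨k, hk⟩ := exists_nat_one_div_lt hδ
  obtain ⟨N, hN⟩ := eventually_atTop.mp (hω k)
  exact ⟨N, fun n hn => by
    have := hN n hn
    rw [Real.dist_eq]
    exact this.trans hk⟩
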